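/- Assume Δnb ≠ 0 and ‖Δnb‖ < r + r′. Then h is (right-)differentiable at α = 0 within [0,1], and its derivative there equals √ρ̃b · ((r + r′) − ‖Δnb‖ − ⟨Δnb, Δna − Δnb⟩/‖Δnb‖). In particular, the sign of the derivative of h at 0 equals the sign of (r + r′) − ‖Δnb‖ − ⟨Δnb, Δna − Δnb⟩/‖Δnb‖. -/

import Mathlib

open Set
open scoped RealInnerProductSpace

/-- Right derivative of `h` at `α = 0` within `[0,1]`, and its sign
(the "easy case" test at `α = 0`). -/
theorem stmt_11
    (d : ℕ) (hd : 1 ≤ d)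
    (Δna Δnb : EuclideanSpace ℝ (Fin d))
    (r r' : ℝ) (hr : 0 < r) (hr' : 0 < r')
    (ρta ρtb : ℝ) (hρta : 0 < ρta) (hρtb : 0 < ρtb)
    (h : ℝ → ℝ)
    (hh : ∀ β : ℝ, h β = max 0
      (((r + r') - ‖β • Δna + (1 - β) • Δnb‖) /
        Real.sqrt (β ^ 2 / ρta + (1 - β) ^ 2 / ρtb)))
    (hΔnb : Δnb ≠ 0) (hlt : ‖Δnb‖ < r + r') :
    HasDerivWithinAt h
      (Real.sqrt ρtb * ((r + r') - ‖Δnb‖ - ⟪Δnb, Δna - Δnb⟫ / ‖Δnb‖))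
      (Icc (0 : ℝ) 1) 0 ∧
    Real.sign (derivWithin h (Icc (0 : ℝ) 1) 0) =
      Real.sign ((r + r') - ‖Δnb‖ - ⟪Δnb, Δna - Δnb⟫ / ‖Δnb‖) := by
  have hnb : (0:ℝ) < ‖Δnb‖ := norm_pos_iff.mpr hΔnb
  have hsb : (0:ℝ) < Real.sqrt ρtb := Real.sqrt_pos.mpr hρtb
  set c : ℝ → EuclideanSpace ℝ (Fin d) := fun β => β • Δna + (1 - β) • Δnb with hcdef
  have hc0 : c 0 = Δnb := by simp [hcdef]
  have hc : HasDerivAt c (Δna - Δnb) 0 := by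
    have h1 : HasDerivAt (fun β : ℝ => β • Δna) ((1:ℝ) • Δna) 0 :=
      (hasDerivAt_id (0:ℝ)).smul_const Δna
    have h2 : HasDerivAt (fun β : ℝ => (1 - β) • Δnb) ((-1:ℝ) • Δnb) 0 := by
      have := ((hasDerivAt_id (0:ℝ)).const_sub 1).smul_const Δnb
      simpa using this
    have := h1.add h2
    exact this.congr_deriv (by simp [sub_eq_add_neg])
  -- derivative of the inner product ⟪c β, c β⟫
  have hq : HasDerivAt (fun β => ⟪c β, c β⟫) (2 * ⟪Δnb, Δna - Δnb⟫) 0 := by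
    have this1 := hc.inner ℝ hc
    rw [hc0] at this1
    have h2 : (2:ℝ) * ⟪Δnb, Δna - Δnb⟫ = ⟪Δnb, Δna - Δnb⟫ + ⟪Δna - Δnb, Δnb⟫ := by
      rw [two_mul, real_inner_comm Δnb (Δna - Δnb)]
    rw [h2]
    exact this1
  -- derivative of the norm of the curve
  have hnorm : HasDerivAt (fun β => ‖c β‖) (⟪Δnb, Δna - Δnb⟫ / ‖Δnb‖) 0 := by
    have hq0 : ⟪c 0, c 0⟫ = ‖Δnb‖ ^ 2 := by
      rw [hc0, real_inner_self_eq_norm_sq]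
    have hqne : ⟪c 0, c 0⟫ ≠ 0 := by
      rw [hq0]; positivity
    have := hq.sqrt hqne
    have heq : (fun β => Real.sqrt ⟪c β, c β⟫) = fun β => ‖c β‖ := by
      funext β
      rw [real_inner_self_eq_norm_sq, Real.sqrt_sq (norm_nonneg _)]
    rw [heq, hq0, Real.sqrt_sq (norm_nonneg _)] at this
    have hval : 2 * ⟪Δnb, Δna - Δnb⟫ / (2 * ‖Δnb‖) = ⟪Δnb, Δna - Δnb⟫ / ‖Δnb‖ := by
      rw [mul_div_mul_left _ _ (two_ne_zero)]
    rwa [hval] at this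
  -- denominator
  have he : (0:ℝ) ^ 2 / ρta + (1 - 0) ^ 2 / ρtb = 1 / ρtb := by norm_num
  have hu : HasDerivAt (fun β : ℝ => β ^ 2 / ρta + (1 - β) ^ 2 / ρtb) (-2 / ρtb) 0 := by
    have h1 : HasDerivAt (fun β : ℝ => β ^ 2) (0 : ℝ) 0 := by
      simpa using hasDerivAt_pow 2 (0:ℝ)
    have h2 : HasDerivAt (fun β : ℝ => (1 - β) ^ 2) (-2 : ℝ) 0 := by
      have h3 := ((hasDerivAt_id (0:ℝ)).const_sub 1).pow 2
      norm_num [id] at h3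
      exact h3
    have := (h1.div_const ρta).add (h2.div_const ρtb)
    exact this.congr_deriv (by ring)
  have hm0 : Real.sqrt (1 / ρtb) = (Real.sqrt ρtb)⁻¹ := by
    rw [one_div, Real.sqrt_inv]
  have hs2 : Real.sqrt ρtb ^ 2 = ρtb := Real.sq_sqrt hρtb.le
  have hm0ne : Real.sqrt (1 / ρtb) ≠ 0 := by
    rw [hm0]; exact inv_ne_zero hsb.ne'
  have hm : HasDerivAt (fun β : ℝ => Real.sqrt (β ^ 2 / ρta + (1 - β) ^ 2 / ρtb))
      ((-2 / ρtb) / (2 * Real.sqrt (1 / ρtb))) 0 := by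
    have hne : (0:ℝ) ^ 2 / ρta + (1 - 0) ^ 2 / ρtb ≠ 0 := by
      rw [he]; positivity
    have := hu.sqrt hne
    rwa [he] at this
  -- numerator
  have hnum : HasDerivAt (fun β => (r + r') - ‖c β‖) (-(⟪Δnb, Δna - Δnb⟫ / ‖Δnb‖)) 0 :=
    hnorm.const_sub (r + r')
  -- quotient
  set ip : ℝ := ⟪Δnb, Δna - Δnb⟫ with hip
  set D : ℝ := Real.sqrt ρtb * ((r + r') - ‖Δnb‖ - ip / ‖Δnb‖) with hD
  set g : ℝ → ℝ := fun β => ((r + r') - ‖c β‖) /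
      Real.sqrt (β ^ 2 / ρta + (1 - β) ^ 2 / ρtb) with hgdef
  have hg : HasDerivAt g D 0 := by
    have hmne : Real.sqrt ((0:ℝ) ^ 2 / ρta + (1 - 0) ^ 2 / ρtb) ≠ 0 := by
      rw [he]; exact hm0ne
    have hdiv := hnum.div hm hmne
    rw [he, hc0] at hdiv
    refine hdiv.congr_deriv ?_
    symm
    rw [hD, hm0, ← hs2]
    have hsne : Real.sqrt ρtb ≠ 0 := hsb.ne'
    have hnbne : ‖Δnb‖ ≠ 0 := hnb.ne'
    field_simp
    rw [Real.sq_sqrt (sq_nonneg _)]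
    ring
  have hg0eq : g 0 = ((r + r') - ‖Δnb‖) / Real.sqrt (1 / ρtb) := by
    show ((r + r') - ‖c 0‖) / Real.sqrt ((0:ℝ) ^ 2 / ρta + (1 - 0) ^ 2 / ρtb) = _
    rw [hc0, he]
  have hg0pos : 0 < g 0 := by
    rw [hg0eq]
    exact div_pos (sub_pos.mpr hlt) (Real.sqrt_pos.mpr (by positivity))
  -- h agrees with g near 0
  have heqv : h =ᶠ[nhds (0:ℝ)] g := by
    have hmem : g ⁻¹' Ioi 0 ∈ nhds (0:ℝ) :=
      hg.continuousAt.preimage_mem_nhds (Ioi_mem_nhds hg0pos)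
    filter_upwards [hmem] with β hβ
    rw [hh β]
    exact max_eq_right (le_of_lt hβ)
  have hderiv : HasDerivWithinAt h D (Icc (0:ℝ) 1) 0 := by
    refine (hg.hasDerivWithinAt).congr_of_eventuallyEq
      (heqv.filter_mono nhdsWithin_le_nhds) ?_
    rw [hh 0]
    exact max_eq_right (le_of_lt hg0pos)
  refine ⟨hderiv, ?_⟩
  have hud : UniqueDiffWithinAt ℝ (Icc (0:ℝ) 1) 0 :=
    (uniqueDiffOn_Icc one_pos) 0 ⟨le_refl 0, zero_le_one⟩
  rw [hderiv.derivWithin hud, hD]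
  set x : ℝ := (r + r') - ‖Δnb‖ - ip / ‖Δnb‖ with hx
  rcases lt_trichotomy x 0 with hlt'|heq'|hgt'
  · rw [Real.sign_of_neg hlt', Real.sign_of_neg (mul_neg_of_pos_of_neg hsb hlt')]
  · simp [heq']
  · rw [Real.sign_of_pos hgt', Real.sign_of_pos (mul_pos hsb hgt')]
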